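/- Let R be a *-ring and extend the involution to the power series ring R[[x]] coefficientwise. Then R[[x]] is strongly J-*-clean if and only if R is strongly J-*-clean. -/

import Mathlib

open PowerSeries

/-- The coefficientwise involution on `R[[x]]`. -/
noncomputable instance powerSeriesStarRing (R : Type*) [Ring R] [StarRing R] :
    StarRing (PowerSeries R) where
  star f := PowerSeries.mk fun n => star (PowerSeries.coeff n f)
  star_involutive f := by
    ext n
    simp
  star_add f g := by
    ext n
    simp
  star_mul f g := by
    ext n
    simp only [PowerSeries.coeff_mk, PowerSeries.coeff_mul, star_sum, star_mul]
    exact Finset.sum_nbij' (fun p => (p.2, p.1)) (fun p => (p.2, p.1))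
      (by simp [Finset.mem_antidiagonal, add_comm])
      (by simp [Finset.mem_antidiagonal, add_comm])
      (by simp) (by simp) (by simp)

/-- A *-ring `R` is strongly J-*-clean if every element is the sum of a projection
and an element of the Jacobson radical that commute. -/
def StronglyJStarClean (R : Type*) [Ring R] [StarRing R] : Prop :=
  ∀ a : R, ∃ e u : R, e * e = e ∧ star e = e ∧
    u ∈ Ideal.jacobson (⊥ : Ideal R) ∧ a = e + u ∧ a * e = e * a

section Aux

variable {A : Type*} [Ring A]

/-- In any ring, elements of the Jacobson radical are quasi-regular. -/
lemma jac_unit {u : A} (hu : u ∈ Ideal.jacobson (⊥ : Ideal A)) (y : A) :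
    IsUnit (y * u + 1) := by
  obtain ⟨z, hz⟩ := Ideal.mem_jacobson_iff.1 hu y
  rw [Ideal.mem_bot, sub_eq_zero] at hz
  have hz' : z * (y * u + 1) = 1 := by rw [mul_add, mul_one, ← mul_assoc, hz]
  have hv : z * y * u ∈ Ideal.jacobson (⊥ : Ideal A) := Ideal.mul_mem_left _ _ hu
  obtain ⟨t, ht⟩ := Ideal.mem_jacobson_iff.1 hv (-1)
  rw [Ideal.mem_bot, sub_eq_zero] at ht
  have hzz : z = 1 - z * y * u := eq_sub_of_add_eq' hz
  have htz : t * z = 1 := by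
    rw [hzz]
    calc t * (1 - z * y * u) = t * (-1) * (z * y * u) + t := by noncomm_ring
    _ = 1 := ht
  have hteq : t = y * u + 1 := by
    calc t = t * (z * (y * u + 1)) := by rw [hz', mul_one]
    _ = t * z * (y * u + 1) := by rw [mul_assoc]
    _ = y * u + 1 := by rw [htz, one_mul]
  exact ⟨⟨y * u + 1, z, by rw [← hteq]; exact htz, hz'⟩, rfl⟩

variable [StarRing A]

/-- In a strongly J-*-clean ring, every idempotent is a projection. -/
lemma idem_star (hA : StronglyJStarClean A) {a : A} (ha : a * a = a) : star a = a := by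
  obtain ⟨e, u, he, hse, hu, hae, hcomm⟩ := hA a
  have hu' : u = a - e := by rw [hae, add_sub_cancel_left]
  have hea : e * a = a * e := hcomm.symm
  have haea : a * e * a = a * e := by rw [mul_assoc, hea, ← mul_assoc, ha]
  have haee : a * e * e = a * e := by rw [mul_assoc, he]
  have h3u : (a - e) * (a - e) * (a - e) = a - e := by
    simp only [sub_mul, mul_sub, ha, he, hea, haea, haee]
    abel
  have hw0 : u * (1 - u * u) = 0 := by
    rw [mul_sub, mul_one, ← mul_assoc, hu', h3u, sub_self]
  have hu2 : u * u ∈ Ideal.jacobson (⊥ : Ideal A) := Ideal.mul_mem_left _ _ hu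
  obtain ⟨w, hw⟩ := jac_unit hu2 (-1)
  have h1 : u * ((-1) * (u * u) + 1) = 0 := by
    have h2 : (-1 : A) * (u * u) + 1 = 1 - u * u := by noncomm_ring
    rw [h2]; exact hw0
  have hu0 : u = 0 := by
    calc u = u * (↑w * ↑w⁻¹) := by rw [w.mul_inv, mul_one]
    _ = u * ↑w * ↑w⁻¹ := by rw [mul_assoc]
    _ = 0 := by rw [hw, h1, zero_mul]
  rw [hae, hu0, add_zero, hse]

/-- In a strongly J-*-clean ring, `f * r * f = f * r` for every idempotent `f`. -/
lemma idem_aux (hA : StronglyJStarClean A) {f : A} (hf : f * f = f) (r : A) :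
    f * r * f = f * r := by
  have hfs : star f = f := idem_star hA hf
  have hffx : ∀ x : A, f * (f * x) = f * x := fun x => by rw [← mul_assoc, hf]
  have haa : (f + f * r - f * r * f) * (f + f * r - f * r * f) = f + f * r - f * r * f := by
    have q1 : (f * r * f) * (f * r) = (f * r) * (f * r) := by
      rw [mul_assoc (f * r) f (f * r), hffx]
    have q2 : (f * r) * (f * r * f) = (f * r) * (f * r) * f := by
      rw [← mul_assoc]
    have q3 : (f * r * f) * (f * r * f) = (f * r) * (f * r) * f := by
      rw [← mul_assoc, q1]
    have p5 : f * r * f * f = f * r * f := by rw [mul_assoc (f * r) f f, hf]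
    have p1 : f * (f * r) = f * r := hffx r
    have p2 : f * (f * r * f) = f * r * f := by
      rw [← mul_assoc, ← mul_assoc, hf]
    simp only [add_mul, mul_add, sub_mul, mul_sub, hf, p1, p2, p5, q1, q2, q3]
    abel
  have hstar : star (f + f * r - f * r * f) = f + f * r - f * r * f := idem_star hA haa
  simp only [star_sub, star_add, star_mul, hfs] at hstar
  have hmul := congrArg (f * ·) hstar
  simp only [mul_add, mul_sub, mul_assoc, hf, hffx, add_sub_cancel_right] at hmul
  -- hopefully hmul : f = f + f * r - f * (r * f) (or similar)
  have h5 : f * r - f * (r * f) = 0 := by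
    have h4 : f + (f * r - f * (r * f)) = f := by
      rw [← add_sub_assoc]; exact hmul.symm
    exact (add_eq_left).mp h4
  rw [mul_assoc]
  exact (sub_eq_zero.mp h5).symm

/-- In a strongly J-*-clean ring, idempotents are central. -/
lemma idem_central (hA : StronglyJStarClean A) {f : A} (hf : f * f = f) (r : A) :
    f * r = r * f := by
  have h1f : (1 - f) * (1 - f) = 1 - f := by
    simp only [mul_sub, sub_mul, mul_one, one_mul, hf]; abel
  have h2 := idem_aux hA h1f r
  rw [mul_sub, mul_one] at h2
  have h3 : (1 - f) * r * f = 0 := sub_eq_self.mp h2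
  simp only [sub_mul, one_mul] at h3
  rw [sub_eq_zero] at h3
  -- h3 : r * f = f * r * f
  rw [idem_aux hA hf r] at h3
  exact h3.symm

end Aux

section PS

variable {R : Type*} [Ring R] [StarRing R]

lemma coeff_star (f : PowerSeries R) (n : ℕ) :
    PowerSeries.coeff n (star f) = star (PowerSeries.coeff n f) := by
  show PowerSeries.coeff n (PowerSeries.mk fun k => star (PowerSeries.coeff k f)) = _
  rw [PowerSeries.coeff_mk]

lemma jac_ps_down {u : PowerSeries R} (hu : u ∈ Ideal.jacobson (⊥ : Ideal (PowerSeries R))) :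
    constantCoeff u ∈ Ideal.jacobson (⊥ : Ideal R) := by
  rw [Ideal.mem_jacobson_iff]
  intro y
  obtain ⟨z, hz⟩ := Ideal.mem_jacobson_iff.1 hu (C y)
  rw [Ideal.mem_bot] at hz
  refine ⟨constantCoeff z, ?_⟩
  rw [Ideal.mem_bot]
  have h := congrArg (constantCoeff) hz
  simpa [map_sub, map_add, map_mul] using h

lemma jac_ps_up {u : PowerSeries R}
    (hu : constantCoeff u ∈ Ideal.jacobson (⊥ : Ideal R)) :
    u ∈ Ideal.jacobson (⊥ : Ideal (PowerSeries R)) := by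
  rw [Ideal.mem_jacobson_iff]
  intro y
  have hU : IsUnit (y * u + 1) := by
    rw [PowerSeries.isUnit_iff_constantCoeff]
    simpa [map_add, map_mul] using jac_unit hu (constantCoeff y)
  obtain ⟨w, hw⟩ := hU
  refine ⟨↑w⁻¹, ?_⟩
  rw [Ideal.mem_bot, sub_eq_zero]
  calc (↑w⁻¹ : PowerSeries R) * y * u + ↑w⁻¹ = ↑w⁻¹ * (y * u + 1) := by
        rw [mul_add, mul_one, mul_assoc]
  _ = 1 := by rw [← hw, w.inv_mul]

end PS

theorem stmt_18 (R : Type*) [Ring R] [StarRing R] :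
    StronglyJStarClean (PowerSeries R) ↔ StronglyJStarClean R := by
  constructor
  · intro hPS a
    obtain ⟨E, U, hE, hsE, hU, haEU, hcomm⟩ := hPS (C a)
    refine ⟨constantCoeff E, constantCoeff U, ?_, ?_, jac_ps_down hU, ?_, ?_⟩
    · rw [← map_mul, hE]
    · calc star (constantCoeff E) = constantCoeff (star E) := by
            rw [← PowerSeries.coeff_zero_eq_constantCoeff_apply,
              ← PowerSeries.coeff_zero_eq_constantCoeff_apply, coeff_star]
      _ = constantCoeff E := by rw [hsE]
    · have h := congrArg (constantCoeff) haEU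
      simpa [map_add] using h
    · have h := congrArg (constantCoeff) hcomm
      simpa [map_mul] using h
  · intro hR f
    obtain ⟨e, u, he, hse, hu, hfe, _⟩ := hR (constantCoeff f)
    refine ⟨C e, f - C e, ?_, ?_, ?_, by abel, ?_⟩
    · rw [← map_mul, he]
    · ext n
      rw [coeff_star, PowerSeries.coeff_C]
      split_ifs
      · exact hse
      · exact star_zero R
    · apply jac_ps_up
      rw [map_sub, PowerSeries.constantCoeff_C]
      have h : constantCoeff f - e = u := by rw [hfe, add_sub_cancel_left]
      rw [h]; exact hu
    · ext n
      rw [PowerSeries.coeff_mul_C, PowerSeries.coeff_C_mul]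
      exact (idem_central hR he _).symm
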